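/- Suppose Ω ⊂ ℝⁿ is such that for every q ∈ L_{2,0}(Ω), the solution u ∈ H¹(Ω) ∩ L_{2,0}(Ω) of the variational Neumann problem ∫_Ω ∇u·∇v dx = ∫_Ω q v dx for all v ∈ H¹(Ω) ∩ L_{2,0}(Ω) belongs to H²(Ω) with ‖u‖_{H²(Ω)} ≲ ‖q‖_{L₂(Ω)}. Then the Leray projector Π is bounded on ℍ¹(Ω), i.e., Π ∈ L(ℍ¹(Ω),ℍ¹(Ω)). -/

import Mathlib

open scoped RealInnerProductSpace

/-- **(Proposition 2.8): if for every `q ∈ L_{2,0}(Ω)` the solution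
`z ∈ H¹(Ω) ∩ L_{2,0}(Ω)` of the variational Neumann problem
`∫_Ω ∇z·∇v dx = ∫_Ω q v dx` (for all `v ∈ H¹(Ω) ∩ L_{2,0}(Ω)`) belongs to `H²(Ω)`
with `‖z‖_{H²(Ω)} ≲ ‖q‖_{L₂(Ω)}`, then the Leray projector `Π` is bounded on
`ℍ¹(Ω)`, i.e. `Π ∈ 𝓛(ℍ¹(Ω), ℍ¹(Ω))`.**

Abstract rendering:
* `H` = `L₂(Ω)ⁿ` with the closed subspace `K` = `ℋ⁰(Ω)`; `Π = orthogonalProjection K`.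
* `Hb` = `ℍ¹(Ω)` with its continuous embedding `ι : Hb → H`, spatial divergence
  `div : Hb → S` (`S = L₂(Ω)`), `S0 = L_{2,0}(Ω) ⊆ S`.
* `Q` = `H¹(Ω) ∩ L_{2,0}(Ω)` with gradient `gradQ : Q → H` and embedding `ιQS : Q → S`;
  `H2` = `H²(Ω) ∩ L_{2,0}(Ω)` with embedding `ιH2Q : H2 → Q` and gradient
  `gradH2 : H2 → Hb` (for the Neumann solution `∇z·n = 0`, so `∇z ∈ ℍ¹(Ω)`).
* Hypotheses record: mean-zero of `div u` for `u ∈ ℍ¹(Ω)`; the integration by parts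
  `∫ u·∇v = −∫ (div u) v` (no boundary term since `u·n = 0`); the Helmholtz
  decomposition `L₂(Ω)ⁿ = ℋ⁰(Ω) ⊕⊥ ∇(H¹(Ω) ∩ L_{2,0}(Ω))`; and the `H²`-regularity
  assumption of the proposition.
Conclusion: `Π` maps `ℍ¹(Ω)` boundedly into itself. -/
theorem leray_projector_bounded_of_H2_regularity
    {H Hb S Q H2 : Type*}
    [NormedAddCommGroup H] [InnerProductSpace ℝ H] [CompleteSpace H]
    [NormedAddCommGroup Hb] [InnerProductSpace ℝ Hb] [CompleteSpace Hb]
    [NormedAddCommGroup S] [InnerProductSpace ℝ S] [CompleteSpace S]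
    [NormedAddCommGroup Q] [InnerProductSpace ℝ Q] [CompleteSpace Q]
    [NormedAddCommGroup H2] [InnerProductSpace ℝ H2] [CompleteSpace H2]
    (K : Submodule ℝ H) [CompleteSpace K]   -- `ℋ⁰(Ω)`, a closed subspace of `L₂(Ω)ⁿ`
    (ι : Hb →L[ℝ] H) (hι : Function.Injective ι)
    (divb : Hb →L[ℝ] S) (S0 : Submodule ℝ S)
    (hdiv0 : ∀ u : Hb, divb u ∈ S0)         -- `∫_Ω div u dx = 0` since `u·n = 0`
    (gradQ : Q →L[ℝ] H) (ιQS : Q →L[ℝ] S)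
    (ιH2Q : H2 →L[ℝ] Q) (gradH2 : H2 →L[ℝ] Hb)
    (hgrad : ∀ z2 : H2, ι (gradH2 z2) = gradQ (ιH2Q z2))
    -- integration by parts on `ℍ¹(Ω)` (no boundary term since `u·n = 0` on `∂Ω`):
    (hIBP : ∀ (u : Hb) (v : Q), ⟪ι u, gradQ v⟫ = - ⟪divb u, ιQS v⟫)
    -- Helmholtz decomposition: `(Id − Π) u ∈ ∇(H¹(Ω) ∩ L_{2,0}(Ω))` and
    -- `ℋ⁰(Ω) ⊥ ∇(H¹(Ω) ∩ L_{2,0}(Ω))`: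
    (hHelm : ∀ uH : H, ∃ z : Q, gradQ z = uH - (Submodule.orthogonalProjectionOnto K uH : H))
    (horth : ∀ k ∈ K, ∀ v : Q, ⟪k, gradQ v⟫ = 0)
    -- the `H²(Ω)`-regularity assumption for the Neumann problem:
    (hreg : ∃ C > 0, ∀ q ∈ S0, ∀ z : Q,
      (∀ v : Q, ⟪gradQ z, gradQ v⟫ = ⟪q, ιQS v⟫) →
      ∃ z2 : H2, ιH2Q z2 = z ∧ ‖z2‖ ≤ C * ‖q‖) :
    -- conclusion: `Π ∈ 𝓛(ℍ¹(Ω), ℍ¹(Ω))`: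
    ∃ C > 0, ∀ u : Hb, ∃ pu : Hb,
      ι pu = (Submodule.orthogonalProjectionOnto K (ι u) : H) ∧ ‖pu‖ ≤ C * ‖u‖ := by
  obtain ⟨C, hC, hregC⟩ := hreg
  refine ⟨1 + ‖gradH2‖ * C * ‖divb‖, by positivity, fun u => ?_⟩
  obtain ⟨z, hz⟩ := hHelm (ι u)
  have hsol : ∀ v : Q, ⟪gradQ z, gradQ v⟫ = ⟪-(divb u), ιQS v⟫ := by
    intro v
    rw [hz, inner_sub_left, horth _ (Submodule.orthogonalProjectionOnto K (ι u)).2 v, hIBP u v,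
      inner_neg_left]
    ring
  obtain ⟨z2, hz2, hz2n⟩ := hregC (-(divb u)) (neg_mem (hdiv0 u)) z hsol
  refine ⟨u - gradH2 z2, ?_, ?_⟩
  · rw [map_sub, hgrad, hz2, hz]
    abel
  · calc ‖u - gradH2 z2‖ ≤ ‖u‖ + ‖gradH2 z2‖ := norm_sub_le _ _
    _ ≤ ‖u‖ + ‖gradH2‖ * ‖z2‖ := by gcongr; exact gradH2.le_opNorm z2
    _ ≤ ‖u‖ + ‖gradH2‖ * (C * ‖-(divb u)‖) := by gcongr
    _ ≤ ‖u‖ + ‖gradH2‖ * (C * (‖divb‖ * ‖u‖)) := by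
        rw [norm_neg]; gcongr; exact divb.le_opNorm u
    _ = (1 + ‖gradH2‖ * C * ‖divb‖) * ‖u‖ := by ring
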